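/- Let h : (0, ε) → ℝ be differentiable, positive, and satisfy h'(r) = 2 (cos r / sin r) h(r) for all r ∈ (0, ε), and suppose lim_{r→0} r⁻² h(r) = h₀ for some h₀ > 0. Then h(r) = h₀ sin² r for all r ∈ (0, ε). -/

import Mathlib

open Real Set Filter

/-- If `h` is differentiable and positive on `(0,ε)` with
`h' r = 2 (cos r / sin r) h r`, and `r⁻² h r → h₀ > 0` as `r → 0⁺`, then
`h r = h₀ sin² r` on `(0,ε)`. -/
theorem stmt_2 (ε h₀ : ℝ) (hε : 0 < ε) (hh₀ : 0 < h₀) (h : ℝ → ℝ)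
    (hdiff : ∀ r ∈ Ioo 0 ε, HasDerivAt h (2 * (Real.cos r / Real.sin r) * h r) r)
    (hpos : ∀ r ∈ Ioo 0 ε, 0 < h r)
    (hlim : Tendsto (fun r : ℝ => r⁻¹ ^ 2 * h r) (nhdsWithin 0 (Ioi 0)) (nhds h₀)) :
    ∀ r ∈ Ioo 0 ε, h r = h₀ * Real.sin r ^ 2 := by
  set g : ℝ → ℝ := fun x => h x / Real.sin x ^ 2 with hg
  have hgd : ∀ x ∈ Ioo 0 ε, x < π → HasDerivAt g 0 x := by
    intro x hx hxπ
    have hsin : Real.sin x ≠ 0 := ne_of_gt (Real.sin_pos_of_pos_of_lt_pi hx.1 hxπ)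
    have hs : HasDerivAt (fun y => Real.sin y ^ 2) (2 * Real.sin x * Real.cos x) x := by
      have := (Real.hasDerivAt_sin x).pow 2
      exact this.congr_deriv (by norm_num)
    have hd := (hdiff x hx).div hs (pow_ne_zero 2 hsin)
    refine hd.congr_deriv ?_
    field_simp
    ring
  -- limit of g at 0⁺ is h₀
  have hslope : Tendsto (fun x => Real.sin x / x) (nhdsWithin 0 (Ioi 0)) (nhds 1) := by
    have h1 := (hasDerivAt_iff_tendsto_slope).1 (Real.hasDerivAt_sin 0)
    rw [Real.cos_zero] at h1
    have h2 : Tendsto (slope Real.sin 0) (nhdsWithin 0 (Ioi 0)) (nhds 1) :=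
      h1.mono_left (nhdsWithin_mono 0 (fun y hy => ne_of_gt hy))
    refine h2.congr' ?_
    filter_upwards [self_mem_nhdsWithin] with y hy
    simp [slope, Real.sin_zero, div_eq_inv_mul]
  have hglim : Tendsto g (nhdsWithin 0 (Ioi 0)) (nhds h₀) := by
    have hprod : Tendsto (fun x => ((Real.sin x / x)⁻¹) ^ 2 * (x⁻¹ ^ 2 * h x))
        (nhdsWithin 0 (Ioi 0)) (nhds h₀) := by
      have : Tendsto (fun x => ((Real.sin x / x)⁻¹) ^ 2) (nhdsWithin 0 (Ioi 0)) (nhds 1) := by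
        have := (hslope.inv₀ one_ne_zero).pow 2
        simpa using this
      simpa using this.mul hlim
    refine hprod.congr' ?_
    have hmem : Ioo (0:ℝ) π ∈ nhdsWithin (0:ℝ) (Ioi 0) := by
      apply mem_nhdsWithin.2
      exact ⟨Iio π, isOpen_Iio, Real.pi_pos, fun y hy => ⟨hy.2, hy.1⟩⟩
    filter_upwards [hmem] with x hx
    have hx0 : x ≠ 0 := ne_of_gt hx.1
    have hsin : Real.sin x ≠ 0 := ne_of_gt (Real.sin_pos_of_pos_of_lt_pi hx.1 hx.2)
    simp only [hg]
    field_simp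
  -- h = h₀ sin² on (0, min ε π)
  have key : ∀ r ∈ Ioo 0 ε, r < π → h r = h₀ * Real.sin r ^ 2 := by
    intro r hr hrπ
    have hconst : ∀ x ∈ Ioo 0 r, g x = g r := by
      intro x hx
      have hsub : Icc x r ⊆ Ioo 0 ε := fun y hy =>
        ⟨lt_of_lt_of_le hx.1 hy.1, lt_of_le_of_lt hy.2 hr.2⟩
      have := constant_of_has_deriv_right_zero (f := g) (a := x) (b := r)
        (fun y hy => ((hgd y (hsub hy) (lt_of_le_of_lt hy.2 hrπ)).continuousAt.continuousWithinAt))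
        (fun y hy => ((hgd y (hsub (Ico_subset_Icc_self hy))
          (lt_trans hy.2 hrπ)).hasDerivWithinAt))
      exact (this r ⟨le_of_lt hx.2, le_rfl⟩).symm
    have hgr : g r = h₀ := by
      have htend : Tendsto g (nhdsWithin 0 (Ioi 0)) (nhds (g r)) := by
        refine tendsto_const_nhds.congr' ?_
        have hmem : Ioo (0:ℝ) r ∈ nhdsWithin (0:ℝ) (Ioi 0) := by
          apply mem_nhdsWithin.2
          exact ⟨Iio r, isOpen_Iio, hr.1, fun y hy => ⟨hy.2, hy.1⟩⟩
        filter_upwards [hmem] with x hx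
        exact (hconst x hx).symm
      exact tendsto_nhds_unique htend hglim
    have hsin : Real.sin r ≠ 0 := ne_of_gt (Real.sin_pos_of_pos_of_lt_pi hr.1 hrπ)
    have : h r / Real.sin r ^ 2 = h₀ := hgr
    field_simp at this
    linarith [this]
  intro r hr
  by_cases hrπ : r < π
  · exact key r hr hrπ
  · exfalso
    have hπε : π < ε := lt_of_le_of_lt (not_lt.1 hrπ) hr.2
    have hπ : π ∈ Ioo (0:ℝ) ε := ⟨Real.pi_pos, hπε⟩
    have hcont : Tendsto h (nhdsWithin π (Iio π)) (nhds (h π)) :=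
      ((hdiff π hπ).continuousAt.continuousWithinAt).tendsto
    have htend0 : Tendsto h (nhdsWithin π (Iio π)) (nhds 0) := by
      have hsin2 : Tendsto (fun x => h₀ * Real.sin x ^ 2) (nhdsWithin π (Iio π)) (nhds 0) := by
        have : Tendsto (fun x => h₀ * Real.sin x ^ 2) (nhds π) (nhds (h₀ * Real.sin π ^ 2)) :=
          (continuous_const.mul (Real.continuous_sin.pow 2)).tendsto π
        simpa [Real.sin_pi] using this.mono_left nhdsWithin_le_nhds
      refine hsin2.congr' ?_
      have hmem : Ioo (0:ℝ) π ∈ nhdsWithin π (Iio π) := by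
        apply mem_nhdsWithin.2
        exact ⟨Ioi 0, isOpen_Ioi, Real.pi_pos, fun y hy => ⟨hy.1, hy.2⟩⟩
      filter_upwards [hmem] with x hx
      exact (key x ⟨hx.1, lt_trans hx.2 hπε⟩ hx.2).symm
    have : h π = 0 := tendsto_nhds_unique hcont htend0
    exact absurd this (ne_of_gt (hpos π hπ))
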